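/- The eigenvalues E_𝔫 = −k²/(ℏ²μ² + kη + √(ℏ⁴μ⁴ + 2ℏ²kημ²)) with μ = 𝔫 + (N−1)/2 are strictly increasing in 𝔫, accumulate at 0 (lim_{𝔫→∞} E_𝔫 = 0), and consecutive gaps tend to zero: lim_{𝔫→∞}(E_{𝔫+1} − E_𝔫) = 0. -/

import Mathlib

open Filter

/-- The discrete eigenvalues E_𝔫 = −k²/(ℏ²μ² + kη + √(ℏ⁴μ⁴ + 2ℏ²kημ²)),
μ = 𝔫 + (N−1)/2, are strictly increasing in 𝔫, accumulate at 0, and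
consecutive gaps tend to zero. -/
theorem eigenvalues_monotone_accumulate (ℏ k η : ℝ) (N : ℕ)
    (hℏ : 0 < ℏ) (hk : 0 < k) (hη : 0 < η) (hN : 2 ≤ N) :
    let μ : ℕ → ℝ := fun n => (n : ℝ) + ((N : ℝ) - 1) / 2
    let E : ℕ → ℝ := fun n =>
      -k ^ 2 / (ℏ ^ 2 * μ n ^ 2 + k * η +
        Real.sqrt (ℏ ^ 4 * μ n ^ 4 + 2 * ℏ ^ 2 * k * η * μ n ^ 2))
    StrictMono E ∧
    Tendsto E atTop (nhds 0) ∧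
    Tendsto (fun n => E (n + 1) - E n) atTop (nhds 0) := by
  intro μ E
  have hN1 : (1:ℝ) ≤ (N:ℝ) - 1 := by
    have : (2:ℝ) ≤ (N:ℝ) := by exact_mod_cast hN
    linarith
  have hμpos : ∀ n, 0 < μ n := by
    intro n
    have : (0:ℝ) ≤ (n:ℝ) := Nat.cast_nonneg n
    simp only [μ]; nlinarith
  have hμmono : StrictMono μ := by
    intro a b hab
    have : (a:ℝ) < b := by exact_mod_cast hab
    simp only [μ]; linarith
  set D : ℕ → ℝ := fun n => ℏ ^ 2 * μ n ^ 2 + k * η +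
      Real.sqrt (ℏ ^ 4 * μ n ^ 4 + 2 * ℏ ^ 2 * k * η * μ n ^ 2) with hD
  have hDpos : ∀ n, 0 < D n := by
    intro n
    have h1 : 0 < ℏ ^ 2 * μ n ^ 2 := by positivity
    have h2 : 0 ≤ Real.sqrt (ℏ ^ 4 * μ n ^ 4 + 2 * ℏ ^ 2 * k * η * μ n ^ 2) :=
      Real.sqrt_nonneg _
    have h3 : 0 < k * η := mul_pos hk hη
    simp only [hD]; linarith
  have hDmono : StrictMono D := by
    intro a b hab
    have hμ : μ a < μ b := hμmono hab
    have hμa := hμpos a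
    have hμb := hμpos b
    have hsq : μ a ^ 2 < μ b ^ 2 := by nlinarith
    have h4 : μ a ^ 4 < μ b ^ 4 := by nlinarith
    have hs : Real.sqrt (ℏ ^ 4 * μ a ^ 4 + 2 * ℏ ^ 2 * k * η * μ a ^ 2) ≤
        Real.sqrt (ℏ ^ 4 * μ b ^ 4 + 2 * ℏ ^ 2 * k * η * μ b ^ 2) := by
      apply Real.sqrt_le_sqrt
      have a1 : ℏ ^ 4 * μ a ^ 4 ≤ ℏ ^ 4 * μ b ^ 4 :=
        mul_le_mul_of_nonneg_left h4.le (by positivity)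
      have a2 : 2 * ℏ ^ 2 * k * η * μ a ^ 2 ≤ 2 * ℏ ^ 2 * k * η * μ b ^ 2 :=
        mul_le_mul_of_nonneg_left hsq.le (by positivity)
      linarith
    simp only [hD]
    have : ℏ ^ 2 * μ a ^ 2 < ℏ ^ 2 * μ b ^ 2 := mul_lt_mul_of_pos_left hsq (by positivity)
    linarith
  have hE : ∀ n, E n = -k ^ 2 / D n := fun n => rfl
  have hEmono : StrictMono E := by
    intro a b hab
    rw [hE a, hE b]
    rw [neg_div, neg_div, neg_lt_neg_iff]
    exact div_lt_div_of_pos_left (by positivity) (hDpos a) (hDmono hab)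
  have hE0 : Tendsto E atTop (nhds 0) := by
    have hDtop : Tendsto D atTop atTop := by
      have h1 : Tendsto (fun n => ℏ ^ 2 * μ n ^ 2) atTop atTop := by
        apply Tendsto.const_mul_atTop (by positivity)
        have hμtop : Tendsto μ atTop atTop :=
          tendsto_atTop_add_const_right _ _ tendsto_natCast_atTop_atTop
        exact hμtop.atTop_mul_atTop₀ hμtop |>.congr (fun n => (sq (μ n)).symm)
      apply tendsto_atTop_mono _ h1
      intro n
      have h2 : 0 ≤ Real.sqrt (ℏ ^ 4 * μ n ^ 4 + 2 * ℏ ^ 2 * k * η * μ n ^ 2) :=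
        Real.sqrt_nonneg _
      have h3 : 0 < k * η := mul_pos hk hη
      simp only [hD]; linarith
    have := Tendsto.div_atTop (tendsto_const_nhds (x := -k ^ 2) (f := atTop)) hDtop
    exact this.congr fun n => (hE n).symm
  refine ⟨hEmono, hE0, ?_⟩
  have h1 : Tendsto (fun n => E (n + 1)) atTop (nhds 0) :=
    hE0.comp (tendsto_add_atTop_nat 1)
  simpa using h1.sub hE0
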